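/- Let F be a field, n ≥ 2, T and S sets, k ≤ n, and G = GL(n,F). Fix t_{1,s_1},...,t_{k,s_k} ∈ T with s_1,...,s_k ∈ S. Let (u_s)_{s∈S} and (v_s)_{s∈S} be families of maps T → F^n belonging to V(t_{1,s_1},...,t_{k,s_k}), i.e., rk((u_s)) = rank([u_{s_1}(t_{1,s_1}),...,u_{s_k}(t_{k,s_k})]) = k, and likewise for (v_s). Then (u_s) ≃^G (v_s) (there exists g ∈ GL(n,F) with g·u_s(t) = v_s(t) for all s ∈ S, t ∈ T) if and only if there exist 1 ≤ i_1 < ... < i_k ≤ n and 1 ≤ j_1 < ... < j_k ≤ n such that det([u_{s_1}(t_{1,s_1}),...,u_{s_k}(t_{k,s_k})]_{i_1,...,i_k}) ≠ 0, det([v_{s_1}(t_{1,s_1}),...,v_{s_k}(t_{k,s_k})]_{j_1,...,j_k}) ≠ 0, and ([u_{s_1}(t_{1,s_1}),...,u_{s_k}(t_{k,s_k})]_{i_1,...,i_k})^{-1} u_s(t)_{i_1,...,i_k} = ([v_{s_1}(t_{1,s_1}),...,v_{s_k}(t_{k,s_k})]_{j_1,...,j_k})^{-1} v_s(t)_{j_1,...,j_k}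 for all t ∈ T and s ∈ S. -/

import Mathlib

open Matrix

/-- The `n × k` matrix whose columns are `u_{s_j}(t_{j,s_j})`, `j = 1, ..., k`. -/
def famColMat {F : Type*} [Field F] {T S : Type*} {n k : ℕ}
    (u : S → T → Fin n → F) (ss : Fin k → S) (ts : Fin k → T) :
    Matrix (Fin n) (Fin k) F :=
  Matrix.of fun i j => u (ss j) (ts j) i

/-- The rank of a family of maps `(u_s : T → Fⁿ)_{s ∈ S}`:
the dimension of `Span {u_s(t) : t ∈ T, s ∈ S}`. -/
noncomputable def famRank (F : Type*) [Field F] {T S : Type*} {n : ℕ}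
    (u : S → T → Fin n → F) : ℕ :=
  Module.finrank F (Submodule.span F (Set.range fun p : S × T => u p.1 p.2))

section Helpers




variable {F : Type*} [Field F] {n k : ℕ}

private lemma inv_mulVec_coeff (A : Matrix (Fin n) (Fin k) F) (ι : Fin k → Fin n)
    (hdet : IsUnit (A.submatrix ι id).det) (c : Fin k → F) :
    (A.submatrix ι id)⁻¹.mulVec (fun m => A.mulVec c (ι m)) = c := by
  have h1 : (fun m => A.mulVec c (ι m)) = (A.submatrix ι id).mulVec c := by
    funext m
    simp [Matrix.mulVec, Matrix.submatrix_apply, dotProduct]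
  rw [h1, Matrix.mulVec_mulVec, Matrix.nonsing_inv_mul _ hdet, Matrix.one_mulVec]

private lemma exists_strictMono_isUnit_submatrix (A : Matrix (Fin n) (Fin k) F)
    (hA : A.rank = k) :
    ∃ ι : Fin k → Fin n, StrictMono ι ∧ IsUnit (A.submatrix ι id).det := by
  classical
  have hspanrow : Module.finrank F (Submodule.span F (Set.range fun i => A i)) = k := by
    rw [show Set.range (fun i => A i) = Set.range A.row from rfl, ← Matrix.rank_eq_finrank_span_row, hA]
  obtain ⟨s, hsub, hspan, hli⟩ := exists_linearIndependent F (Set.range fun i => A i)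
  have hsfin : s.Finite := hli.setFinite
  haveI : Fintype s := hsfin.fintype
  have hcard : Fintype.card s = k := by
    have := finrank_span_set_eq_card hli
    rw [hspan, hspanrow, Set.toFinset_card] at this
    exact this.symm
  -- choose an index for each element of s
  have hchoice : ∀ x : s, ∃ i : Fin n, A i = (x : Fin k → F) := fun x => hsub x.2
  choose f hf using hchoice
  have hfinj : Function.Injective f := by
    intro x y hxy
    apply Subtype.ext
    rw [← hf x, ← hf y, hxy]
  set t : Finset (Fin n) := Finset.univ.image f with ht
  have htcard : t.card = k := by
    rw [ht, Finset.card_image_of_injective _ hfinj, Finset.card_univ, hcard]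
  set ι : Fin k → Fin n := fun m => (t.orderIsoOfFin htcard m : Fin n) with hι
  have hmono : StrictMono ι := fun a b hab => (t.orderIsoOfFin htcard).strictMono hab
  -- σ : each ι m comes from some x in s
  have hσ : ∀ m : Fin k, ∃ x : s, f x = ι m := by
    intro m
    have : ι m ∈ t := (t.orderIsoOfFin htcard m).2
    simpa [ht] using this
  choose σ hσf using hσ
  have hσinj : Function.Injective σ := by
    intro a b hab
    have : ι a = ι b := by rw [← hσf a, ← hσf b, hab]
    exact hmono.injective this
  have hrows : LinearIndependent F (fun m => (A.submatrix ι id) m) := by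
    have : (fun m => (A.submatrix ι id) m) = (fun x : s => (x : Fin k → F)) ∘ σ := by
      funext m
      have : A (ι m) = (σ m : Fin k → F) := by rw [← hσf m, hf (σ m)]
      funext j
      simp [Matrix.submatrix_apply, this]
    rw [this]
    exact hli.comp σ hσinj
  exact ⟨ι, hmono, Matrix.isUnit_iff_isUnit_det _ |>.mp
    (Matrix.linearIndependent_rows_iff_isUnit.mp hrows)⟩

private lemma cols_linearIndependent (A : Matrix (Fin n) (Fin k) F) (hA : A.rank = k) :
    LinearIndependent F (fun j => Aᵀ j) := by
  rw [linearIndependent_iff_card_eq_finrank_span]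
  rw [Set.finrank, show Set.range (fun j => Aᵀ j) = Set.range A.col from rfl, ← Matrix.rank_eq_finrank_span_cols, hA, Fintype.card_fin]

private lemma exists_GL_mul_eq (U V : Matrix (Fin n) (Fin k) F)
    (hU : U.rank = k) (hV : V.rank = k) :
    ∃ g : GL (Fin n) F, (g : Matrix (Fin n) (Fin n) F) * U = V := by
  classical
  have hliU := cols_linearIndependent U hU
  have hliV := cols_linearIndependent V hV
  set WU := Submodule.span F (Set.range fun j => Uᵀ j) with hWU
  set WV := Submodule.span F (Set.range fun j => Vᵀ j) with hWV
  let bU : Module.Basis (Fin k) F WU := Module.Basis.span hliU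
  let bV : Module.Basis (Fin k) F WV := Module.Basis.span hliV
  obtain ⟨WU', hcU⟩ := Submodule.exists_isCompl WU
  obtain ⟨WV', hcV⟩ := Submodule.exists_isCompl WV
  have hfr : Module.finrank F WU' = Module.finrank F WV' := by
    have h1 := Submodule.finrank_add_eq_of_isCompl hcU
    have h2 := Submodule.finrank_add_eq_of_isCompl hcV
    have hU' : Module.finrank F WU = k := by
      rw [hWU, show Set.range (fun j => Uᵀ j) = Set.range U.col from rfl, ← Matrix.rank_eq_finrank_span_cols, hU]
    have hV' : Module.finrank F WV = k := by
      rw [hWV, show Set.range (fun j => Vᵀ j) = Set.range V.col from rfl, ← Matrix.rank_eq_finrank_span_cols, hV]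
    omega
  obtain ⟨e'⟩ := FiniteDimensional.nonempty_linearEquiv_of_finrank_eq hfr
  let eW : WU ≃ₗ[F] WV := bU.equiv bV (Equiv.refl _)
  let e : (Fin n → F) ≃ₗ[F] (Fin n → F) :=
    (Submodule.prodEquivOfIsCompl WU WU' hcU).symm ≪≫ₗ (eW.prodCongr e') ≪≫ₗ
      (Submodule.prodEquivOfIsCompl WV WV' hcV)
  have he : ∀ j, e (Uᵀ j) = Vᵀ j := by
    intro j
    have h1 : (Submodule.prodEquivOfIsCompl WU WU' hcU).symm (bU j : Fin n → F)
        = (bU j, 0) := by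
      apply (Submodule.prodEquivOfIsCompl WU WU' hcU).injective
      simp [Submodule.coe_prodEquivOfIsCompl]
    have h2 : e (bU j : Fin n → F) = ((eW (bU j) : Fin n → F)) := by
      have hz : (eW.prodCongr e') (bU j, 0) = (eW (bU j), 0) := by
        rw [LinearEquiv.prodCongr_apply]
        rw [show e' 0 = 0 from map_zero e']
      simp only [e, LinearEquiv.trans_apply, h1, hz]
      simp [Submodule.coe_prodEquivOfIsCompl]
    have h3 : eW (bU j) = bV j := by
      simp [eW, Module.Basis.equiv_apply]
    have h4 : (bU j : Fin n → F) = Uᵀ j := congrArg Subtype.val (Module.Basis.span_apply hliU j)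
    have h5 : (bV j : Fin n → F) = Vᵀ j := congrArg Subtype.val (Module.Basis.span_apply hliV j)
    rw [← h4, h2, h3, h5]
  set M : Matrix (Fin n) (Fin n) F := LinearMap.toMatrix' (e : (Fin n → F) →ₗ[F] _) with hM
  set M' : Matrix (Fin n) (Fin n) F :=
    LinearMap.toMatrix' (e.symm : (Fin n → F) →ₗ[F] _) with hM'
  have hmul : ∀ x, M.mulVec x = e x := by
    intro x
    rw [← Matrix.toLin'_apply, hM, Matrix.toLin'_toMatrix']
    rfl
  have hMM' : M * M' = 1 := by
    rw [hM, hM', ← LinearMap.toMatrix'_comp]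
    have : (e : (Fin n → F) →ₗ[F] _) ∘ₗ (e.symm : (Fin n → F) →ₗ[F] _) = LinearMap.id := by
      ext x; simp
    rw [this, LinearMap.toMatrix'_id]
  have hM'M : M' * M = 1 := by
    rw [hM, hM', ← LinearMap.toMatrix'_comp]
    have : (e.symm : (Fin n → F) →ₗ[F] _) ∘ₗ (e : (Fin n → F) →ₗ[F] _) = LinearMap.id := by
      ext x; simp
    rw [this, LinearMap.toMatrix'_id]
  refine ⟨⟨M, M', hMM', hM'M⟩, ?_⟩
  ext i j
  have : M.mulVec (Uᵀ j) = Vᵀ j := by rw [hmul, he]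
  have h := congrFun this i
  simpa [Matrix.mul_apply, Matrix.mulVec, dotProduct, Matrix.transpose_apply] using h

private lemma exists_coeff {F : Type*} [Field F] {T S : Type*} {n k : ℕ}
    (u : S → T → Fin n → F) (ss : Fin k → S) (ts : Fin k → T)
    (hu : famRank F u = k) (hU : (famColMat u ss ts).rank = k) (s : S) (t : T) :
    ∃ c : Fin k → F, (famColMat u ss ts).mulVec c = u s t := by
  set A := famColMat u ss ts with hA
  have hcols : Submodule.span F (Set.range Aᵀ)
      = Submodule.span F (Set.range fun p : S × T => u p.1 p.2) := by
    apply Submodule.eq_of_le_of_finrank_le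
    · apply Submodule.span_mono
      rintro x ⟨j, rfl⟩
      exact ⟨(ss j, ts j), rfl⟩
    · rw [show Module.finrank F (Submodule.span F
        (Set.range fun p : S × T => u p.1 p.2)) = k from hu]
      rw [show Module.finrank F (Submodule.span F (Set.range Aᵀ)) = k from by
        rw [show Set.range Aᵀ = Set.range A.col from rfl, ← Matrix.rank_eq_finrank_span_cols, hA, hU]]
  have hmem : u s t ∈ LinearMap.range A.mulVecLin := by
    rw [Matrix.range_mulVecLin, show Set.range A.col = Set.range Aᵀ from rfl, hcols]
    exact Submodule.subset_span ⟨(s, t), rfl⟩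
  obtain ⟨c, hc⟩ := hmem
  exact ⟨c, hc⟩

end Helpers

/-- Theorem 4: two families `(u_s), (v_s) ∈ V(t_{1,s_1},...,t_{k,s_k})` are
`GL(n,F)`-equivalent iff there are strictly increasing row-index choices `ι, ι'` with
nonsingular minors such that
`([u_{s_1}(t_{1,s_1}),...]_ι)⁻¹ u_s(t)_ι = ([v_{s_1}(t_{1,s_1}),...]_{ι'})⁻¹ v_s(t)_{ι'}`
for all `t ∈ T`, `s ∈ S`. -/
theorem families_GL_equivalent_iff_invariants {F : Type*} [Field F] {T S : Type*} {n k : ℕ}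
    (hn : 2 ≤ n) (hk : k ≤ n) (ss : Fin k → S) (ts : Fin k → T)
    (u v : S → T → Fin n → F)
    (hu : famRank F u = k) (hU : (famColMat u ss ts).rank = k)
    (hv : famRank F v = k) (hV : (famColMat v ss ts).rank = k) :
    (∃ g : GL (Fin n) F, ∀ s : S, ∀ t : T,
        (g : Matrix (Fin n) (Fin n) F).mulVec (u s t) = v s t) ↔
      ∃ ι ι' : Fin k → Fin n, StrictMono ι ∧ StrictMono ι' ∧
        ((famColMat u ss ts).submatrix ι id).det ≠ 0 ∧
        ((famColMat v ss ts).submatrix ι' id).det ≠ 0 ∧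
        ∀ s : S, ∀ t : T,
          ((famColMat u ss ts).submatrix ι id)⁻¹.mulVec (fun m => u s t (ι m)) =
            ((famColMat v ss ts).submatrix ι' id)⁻¹.mulVec (fun m => v s t (ι' m)) := by
  set U := famColMat u ss ts with hUdef
  set V := famColMat v ss ts with hVdef
  constructor
  · rintro ⟨g, hg⟩
    obtain ⟨ι, hι, hdU⟩ := exists_strictMono_isUnit_submatrix U hU
    obtain ⟨ι', hι', hdV⟩ := exists_strictMono_isUnit_submatrix V hV
    have hgU : (g : Matrix (Fin n) (Fin n) F) * U = V := by
      ext i j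
      have h := congrFun (hg (ss j) (ts j)) i
      simpa [Matrix.mul_apply, Matrix.mulVec, dotProduct, hUdef, hVdef, famColMat] using h
    refine ⟨ι, ι', hι, hι', hdU.ne_zero, hdV.ne_zero, ?_⟩
    intro s t
    obtain ⟨c, hc⟩ := exists_coeff u ss ts hu hU s t
    have hvc : V.mulVec c = v s t := by
      rw [← hgU, ← Matrix.mulVec_mulVec, hc, hg]
    calc (U.submatrix ι id)⁻¹.mulVec (fun m => u s t (ι m))
        = (U.submatrix ι id)⁻¹.mulVec (fun m => U.mulVec c (ι m)) := by rw [hc]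
      _ = c := inv_mulVec_coeff U ι hdU c
      _ = (V.submatrix ι' id)⁻¹.mulVec (fun m => V.mulVec c (ι' m)) :=
          (inv_mulVec_coeff V ι' hdV c).symm
      _ = (V.submatrix ι' id)⁻¹.mulVec (fun m => v s t (ι' m)) := by rw [hvc]
  · rintro ⟨ι, ι', hι, hι', hdU, hdV, hinv⟩
    have hdU' : IsUnit (U.submatrix ι id).det := isUnit_iff_ne_zero.mpr hdU
    have hdV' : IsUnit (V.submatrix ι' id).det := isUnit_iff_ne_zero.mpr hdV
    obtain ⟨g, hgU⟩ := exists_GL_mul_eq U V hU hV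
    refine ⟨g, fun s t => ?_⟩
    obtain ⟨c, hc⟩ := exists_coeff u ss ts hu hU s t
    obtain ⟨c', hc'⟩ := exists_coeff v ss ts hv hV s t
    have hcc : c = c' := by
      have h1 : (U.submatrix ι id)⁻¹.mulVec (fun m => u s t (ι m)) = c := by
        rw [← hc]; exact inv_mulVec_coeff U ι hdU' c
      have h2 : (V.submatrix ι' id)⁻¹.mulVec (fun m => v s t (ι' m)) = c' := by
        rw [← hc']; exact inv_mulVec_coeff V ι' hdV' c'
      rw [← h1, ← h2]; exact hinv s t
    rw [← hc, Matrix.mulVec_mulVec, hgU, hcc, hc']
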